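/- The SBBA mechanism is dominant-strategy truthful for buyers: for every buyer with true valuation v, every profile of other agents' reports, and every realization of the mechanism's randomness, the buyer's utility (v - p if he trades at price p, 0 otherwise) when bidding v is at least his utility when bidding any other value b. -/

import Mathlib

open scoped Classical

/-! Formalization of the SBBA mechanism on raw bid profiles.
Sellers' asks `A` are sorted ascending and buyers' bids `B` descending using
`Tuple.sort` (which also provides a fixed tie-breaking order).  Ranks are 0-based:
the number of efficient deals `numDeals` is the largest `K` with
`sortedAsks (K-1) ≤ sortedBids (K-1)`; "`s (k+1)`" is `sortedAsks K` and
"`b k`" is `sortedBids (K-1)`. -/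

/-- The `i`-th lowest ask (0-based); arbitrary value `0` beyond the range. -/
noncomputable def sortedAsks {n : ℕ} (A : Fin n → ℝ) : ℕ → ℝ := fun i =>
  if h : i < n then A (Tuple.sort A ⟨i, h⟩) else 0

/-- The `i`-th highest bid (0-based); arbitrary value `0` beyond the range. -/
noncomputable def sortedBids {n : ℕ} (B : Fin n → ℝ) : ℕ → ℝ := fun i =>
  if h : i < n then B (Tuple.sort (fun j => -B j) ⟨i, h⟩) else 0

/-- `K`, the number of efficient deals: the number of positions where the sorted
ask is at most the sorted bid. -/
noncomputable def numDeals {n : ℕ} (A B : Fin n → ℝ) : ℕ :=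
  ((Finset.range n).filter fun i => sortedAsks A i ≤ sortedBids B i).card

/-- 0-based rank of seller `j` in the ascending order of asks. -/
noncomputable def sellerRank {n : ℕ} (A : Fin n → ℝ) (j : Fin n) : ℕ :=
  ((Tuple.sort A).symm j : ℕ)

/-- 0-based rank of buyer `j` in the descending order of bids. -/
noncomputable def buyerRank {n : ℕ} (B : Fin n → ℝ) (j : Fin n) : ℕ :=
  ((Tuple.sort (fun i => -B i)).symm j : ℕ)

/-- Case 1 of SBBA: `s (k+1) ≤ b k` (in particular `k ≥ 1` and `k < n`). -/
def caseOne {n : ℕ} (A B : Fin n → ℝ) : Prop :=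
  1 ≤ numDeals A B ∧ numDeals A B < n ∧
    sortedAsks A (numDeals A B) ≤ sortedBids B (numDeals A B - 1)

/-- The single SBBA trading price `min (s (k+1)) (b k)`:
`s (k+1)` in case 1, `b k` in case 2. -/
noncomputable def price {n : ℕ} (A B : Fin n → ℝ) : ℝ :=
  if caseOne A B then sortedAsks A (numDeals A B) else sortedBids B (numDeals A B - 1)

/-- Buyer `j` wins (trades with probability 1): in case 1 the first `K` buyers win,
in case 2 the first `K - 1` buyers win. -/
noncomputable def buyerWins {n : ℕ} (A B : Fin n → ℝ) (j : Fin n) : Prop :=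
  if caseOne A B then buyerRank B j < numDeals A B
  else buyerRank B j + 1 < numDeals A B

/-- Seller `j`'s probability of trading: `1` for the first `K` sellers in case 1,
`1 - 1/K` for them in case 2 (one of them, uniformly random, is excluded),
and `0` for all other sellers. -/
noncomputable def sellerProb {n : ℕ} (A B : Fin n → ℝ) (j : Fin n) : ℝ :=
  if sellerRank A j < numDeals A B then
    (if caseOne A B then 1 else 1 - 1 / (numDeals A B : ℝ))
  else 0

namespace SBBA
variable {n : ℕ}

lemma sortedBids_coe (B : Fin n → ℝ) (p : Fin n) :
    sortedBids B p = B (Tuple.sort (fun i => -B i) p) := by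
  simp [sortedBids]

lemma antitone_comp_sort (B : Fin n → ℝ) :
    Antitone (fun p => B (Tuple.sort (fun i => -B i) p)) := by
  intro p q h
  have := Tuple.monotone_sort (fun i => -B i) h
  simpa using this

lemma sortedBids_anti (B : Fin n → ℝ) {i k : ℕ} (hik : i ≤ k) (hk : k < n) :
    sortedBids B k ≤ sortedBids B i := by
  have hi : i < n := lt_of_le_of_lt hik hk
  simp only [sortedBids, dif_pos hi, dif_pos hk]
  exact antitone_comp_sort B (show (⟨i, hi⟩ : Fin n) ≤ ⟨k, hk⟩ from hik)

lemma buyerRank_lt (B : Fin n → ℝ) (j : Fin n) : buyerRank B j < n :=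
  ((Tuple.sort (fun i => -B i)).symm j).isLt

lemma sortedBids_rank (B : Fin n → ℝ) (j : Fin n) :
    sortedBids B (buyerRank B j) = B j := by
  simp only [sortedBids, buyerRank, Fin.is_lt, dite_true, Fin.eta, Equiv.apply_symm_apply]

/-- number of buyers with bid at least `t` -/
noncomputable def cntGe (B : Fin n → ℝ) (t : ℝ) : ℕ :=
  (Finset.univ.filter fun l => t ≤ B l).card

/-- number of buyers other than `j` with bid at least `t` -/
noncomputable def cntGe' (B : Fin n → ℝ) (j : Fin n) (t : ℝ) : ℕ :=
  (Finset.univ.filter fun l => l ≠ j ∧ t ≤ B l).card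

lemma le_sortedBids_iff (B : Fin n → ℝ) {t : ℝ} {i : ℕ} (hi : i < n) :
    t ≤ sortedBids B i ↔ i + 1 ≤ cntGe B t := by
  have h := Tuple.lt_card_ge_iff_apply_ge_of_antitone
    (f := fun p => B (Tuple.sort (fun i => -B i) p)) (a := t) (j := ⟨i, hi⟩)
    (antitone_comp_sort B)
  have hcard : (Finset.univ.filter fun l : Fin n => t ≤ B (Tuple.sort (fun i => -B i) l)).card
      = cntGe B t := by
    rw [← Fintype.card_subtype, Fintype.card_congr ((Tuple.sort (fun i => -B i)).subtypeEquiv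
      (q := fun m => t ≤ B m) (fun l => Iff.rfl))]
    rw [Fintype.card_subtype]; rfl
  rw [hcard] at h
  rw [sortedBids, dif_pos hi]
  exact (h.symm).trans (by exact Nat.succ_le_iff.symm)

lemma cntGe_mono (B : Fin n → ℝ) {s t : ℝ} (h : s ≤ t) : cntGe B t ≤ cntGe B s := by
  apply Finset.card_le_card
  intro l hl
  simp only [Finset.mem_filter, Finset.mem_univ, true_and] at *
  exact h.trans hl

lemma cntGe'_le (B : Fin n → ℝ) (j : Fin n) (t : ℝ) : cntGe' B j t ≤ cntGe B t := by
  apply Finset.card_le_card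
  intro l hl
  simp only [Finset.mem_filter, Finset.mem_univ, true_and] at *
  exact hl.2

lemma cntGe'_succ_le (B : Fin n → ℝ) (j : Fin n) {t : ℝ} (h : t ≤ B j) :
    cntGe' B j t + 1 ≤ cntGe B t := by
  have heq : (Finset.univ.filter fun l : Fin n => l ≠ j ∧ t ≤ B l)
      = (Finset.univ.filter fun l => t ≤ B l).erase j := by
    ext l; simp [Finset.mem_erase, and_comm]
  have hmem : j ∈ (Finset.univ.filter fun l : Fin n => t ≤ B l) := by simp [h]
  have hpos : 0 < (Finset.univ.filter fun l : Fin n => t ≤ B l).card :=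
    Finset.card_pos.mpr ⟨j, hmem⟩
  unfold cntGe cntGe'
  rw [heq, Finset.card_erase_of_mem hmem]
  omega

lemma cntGe'_update (B : Fin n → ℝ) (j : Fin n) (x : ℝ) (t : ℝ) :
    cntGe' (Function.update B j x) j t = cntGe' B j t := by
  unfold cntGe'
  congr 1
  apply Finset.filter_congr
  intro l _
  by_cases hl : l = j
  · simp [hl]
  · simp [hl, Function.update_of_ne hl]

lemma cntGe'_mono (B : Fin n → ℝ) (j : Fin n) {s t : ℝ} (h : s ≤ t) :
    cntGe' B j t ≤ cntGe' B j s := by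
  apply Finset.card_le_card
  intro l hl
  simp only [Finset.mem_filter, Finset.mem_univ, true_and] at *
  exact ⟨hl.1, h.trans hl.2⟩

lemma rank_count_lt (B : Fin n → ℝ) (j : Fin n) {i : ℕ} (hi : i < n)
    (h : i < buyerRank B j) : i + 1 ≤ cntGe' B j (sortedBids B i) := by
  classical
  have hcard : (Finset.Iic (⟨i, hi⟩ : Fin n)).card = i + 1 := by
    rw [Fin.card_Iic]
  refine le_trans (le_of_eq hcard.symm) ?_
  apply Finset.card_le_card_of_injOn (fun p => Tuple.sort (fun i => -B i) p)
  · intro p hp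
    rw [Finset.mem_coe, Finset.mem_Iic] at hp
    have hp' : (p : ℕ) ≤ i := hp
    have hpne : Tuple.sort (fun i => -B i) p ≠ j := by
      intro hpj
      have hps : p = (Tuple.sort (fun i => -B i)).symm j := by
        rw [← hpj, Equiv.symm_apply_apply]
      have : (p : ℕ) = buyerRank B j := by rw [hps]; rfl
      omega
    have hple : sortedBids B i ≤ B (Tuple.sort (fun i => -B i) p) := by
      have h2 := sortedBids_anti B hp' hi
      rwa [sortedBids_coe B p] at h2
    simp [hpne, hple]
  · intro a _ b _ hab
    exact (Tuple.sort (fun i => -B i)).injective hab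

lemma rank_count_le (B : Fin n → ℝ) (j : Fin n) {i : ℕ} (hi : i < n)
    (h : buyerRank B j ≤ i) : i ≤ cntGe' B j (sortedBids B i) := by
  classical
  have hmem : (Tuple.sort (fun i => -B i)).symm j ∈ Finset.Iic (⟨i, hi⟩ : Fin n) := by
    simp only [Finset.mem_Iic]
    exact h
  have hcard : ((Finset.Iic (⟨i, hi⟩ : Fin n)).erase
      ((Tuple.sort (fun i => -B i)).symm j)).card = i := by
    rw [Finset.card_erase_of_mem hmem, Fin.card_Iic]; rfl
  refine le_trans (le_of_eq hcard.symm) ?_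
  apply Finset.card_le_card_of_injOn (fun p => Tuple.sort (fun i => -B i) p)
  · intro p hp
    rw [Finset.mem_coe, Finset.mem_erase, Finset.mem_Iic] at hp
    have hp' : (p : ℕ) ≤ i := hp.2
    have hpne : Tuple.sort (fun i => -B i) p ≠ j := by
      intro hpj
      exact hp.1 (by rw [← hpj, Equiv.symm_apply_apply])
    have hple : sortedBids B i ≤ B (Tuple.sort (fun i => -B i) p) := by
      have h2 := sortedBids_anti B hp' hi
      rwa [sortedBids_coe B p] at h2
    simp [hpne, hple]
  · intro a _ b _ hab
    exact (Tuple.sort (fun i => -B i)).injective hab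


section Cross
variable {n : ℕ} (B : Fin n → ℝ) (j : Fin n) {x y : ℝ}

lemma cntGe_update_le (hxy : x ≤ y) (t : ℝ) :
    cntGe (Function.update B j x) t ≤ cntGe (Function.update B j y) t := by
  apply Finset.card_le_card
  intro l hl
  simp only [Finset.mem_filter, Finset.mem_univ, true_and] at *
  by_cases hlj : l = j
  · subst hlj; rw [Function.update_self] at *; exact hl.trans hxy
  · rwa [Function.update_of_ne hlj] at *

lemma sortedBids_update_le (hxy : x ≤ y) {i : ℕ} (hi : i < n) :
    sortedBids (Function.update B j x) i ≤ sortedBids (Function.update B j y) i := by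
  rw [le_sortedBids_iff _ hi]
  exact le_trans ((le_sortedBids_iff _ hi).1 le_rfl) (cntGe_update_le B j hxy _)

lemma rank_update_le (hxy : x ≤ y) :
    buyerRank (Function.update B j y) j ≤ buyerRank (Function.update B j x) j := by
  set B1 := Function.update B j x with hB1
  set B2 := Function.update B j y with hB2
  set r1 := buyerRank B1 j with hr1
  set r2 := buyerRank B2 j with hr2
  by_contra hc
  push_neg at hc
  have hr2n : r2 < n := buyerRank_lt B2 j
  have hi : r2 - 1 < n := by omega
  have hca : (r2 - 1) + 1 ≤ cntGe' B2 j (sortedBids B2 (r2 - 1)) :=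
    rank_count_lt B2 j hi (by omega)
  have hyle : y ≤ sortedBids B2 (r2 - 1) := by
    have := sortedBids_anti B2 (show r2 - 1 ≤ r2 by omega) hr2n
    rw [sortedBids_rank B2 j, hB2, Function.update_self] at this
    exact this
  have h1 : r1 + 1 ≤ cntGe' B2 j y := by
    have := cntGe'_mono B2 j hyle
    omega
  have h2 : r1 + 1 ≤ cntGe B1 y := by
    have he : cntGe' B2 j y = cntGe' B1 j y := by
      rw [hB1, hB2, cntGe'_update, cntGe'_update]
    exact le_trans (by omega) (le_trans he.le (cntGe'_le B1 j y))
  have h3 : y ≤ sortedBids B1 r1 := (le_sortedBids_iff B1 (buyerRank_lt B1 j)).2 h2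
  rw [sortedBids_rank B1 j, hB1, Function.update_self] at h3
  have hxy' : x = y := le_antisymm hxy h3
  have : B1 = B2 := by rw [hB1, hB2, hxy']
  rw [hr1, hr2, this] at hc
  omega

lemma sortedBids_update_above (hxy : x ≤ y) {i : ℕ} (hi : i < n)
    (h : buyerRank (Function.update B j x) j < i) :
    sortedBids (Function.update B j y) i = sortedBids (Function.update B j x) i := by
  set B1 := Function.update B j x with hB1
  set B2 := Function.update B j y with hB2
  refine le_antisymm ?_ (sortedBids_update_le B j hxy hi)
  by_contra hlt
  push_neg at hlt
  by_cases hx : sortedBids B2 i ≤ x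
  · have heq : cntGe B1 (sortedBids B2 i) = cntGe B2 (sortedBids B2 i) := by
      unfold cntGe; congr 1; apply Finset.filter_congr; intro l _
      by_cases hlj : l = j
      · subst hlj
        simp only [hB1, hB2, Function.update_self, eq_iff_iff]
        constructor
        · intro _; exact hx.trans hxy
        · intro _; exact hx
      · simp [hB1, hB2, Function.update_of_ne hlj]
    have h1 : i + 1 ≤ cntGe B2 (sortedBids B2 i) := (le_sortedBids_iff B2 hi).1 le_rfl
    have h2 : sortedBids B2 i ≤ sortedBids B1 i :=
      (le_sortedBids_iff B1 hi).2 (by omega)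
    exact absurd h2 (not_le.mpr hlt)
  · push_neg at hx
    have hr2 : buyerRank B2 j ≤ i := le_trans (rank_update_le B j hxy) (le_of_lt h)
    have h1 : i ≤ cntGe' B2 j (sortedBids B2 i) := rank_count_le B2 j hi hr2
    have he : cntGe' B2 j (sortedBids B2 i) = cntGe' B1 j (sortedBids B2 i) := by
      rw [hB1, hB2, cntGe'_update, cntGe'_update]
    have heq : cntGe B1 (sortedBids B2 i) = cntGe' B1 j (sortedBids B2 i) := by
      unfold cntGe cntGe'; congr 1; apply Finset.filter_congr; intro l _
      by_cases hlj : l = j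
      · subst hlj
        simp only [hB1, Function.update_self, eq_iff_iff]
        constructor
        · intro hcon; exact absurd hcon (not_le.mpr hx)
        · intro hcon; exact absurd hcon.2 (not_le.mpr hx)
      · simp [hlj]
    have h2 : cntGe B1 (sortedBids B2 i) ≤ buyerRank B1 j := by
      by_contra hc
      push_neg at hc
      have h3 : sortedBids B2 i ≤ sortedBids B1 (buyerRank B1 j) :=
        (le_sortedBids_iff B1 (buyerRank_lt B1 j)).2 hc
      rw [sortedBids_rank B1 j, hB1, Function.update_self] at h3
      exact absurd h3 (not_le.mpr hx)
    omega

lemma sortedBids_update_below (hxy : x ≤ y) {i : ℕ}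
    (h : i < buyerRank (Function.update B j y) j) :
    sortedBids (Function.update B j y) i = sortedBids (Function.update B j x) i := by
  set B1 := Function.update B j x with hB1
  set B2 := Function.update B j y with hB2
  have hi : i < n := lt_trans h (buyerRank_lt B2 j)
  refine le_antisymm ?_ (sortedBids_update_le B j hxy hi)
  have h1 : i + 1 ≤ cntGe' B2 j (sortedBids B2 i) := rank_count_lt B2 j hi h
  have he : cntGe' B2 j (sortedBids B2 i) = cntGe' B1 j (sortedBids B2 i) := by
    rw [hB1, hB2, cntGe'_update, cntGe'_update]
  have h2 : i + 1 ≤ cntGe B1 (sortedBids B2 i) :=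
    le_trans (le_trans h1 he.le) (cntGe'_le B1 j _)
  exact (le_sortedBids_iff B1 hi).2 h2

lemma sortedBids_update_shift (hxy : x ≤ y) {i : ℕ}
    (h2 : buyerRank (Function.update B j y) j < i)
    (h1 : i ≤ buyerRank (Function.update B j x) j) :
    sortedBids (Function.update B j y) i = sortedBids (Function.update B j x) (i - 1) := by
  set B1 := Function.update B j x with hB1
  set B2 := Function.update B j y with hB2
  have hi : i < n := lt_of_le_of_lt h1 (buyerRank_lt B1 j)
  have hi1 : i - 1 < n := by omega
  have hipos : 1 ≤ i := by omega
  have he : ∀ t, cntGe' B2 j t = cntGe' B1 j t := by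
    intro t; rw [hB1, hB2, cntGe'_update, cntGe'_update]
  refine le_antisymm ?_ ?_
  · have ha : i ≤ cntGe' B2 j (sortedBids B2 i) := rank_count_le B2 j hi (le_of_lt h2)
    have hb : (i - 1) + 1 ≤ cntGe B1 (sortedBids B2 i) := by
      have := (he (sortedBids B2 i)).le.trans (cntGe'_le B1 j _)
      omega
    exact (le_sortedBids_iff B1 hi1).2 hb
  · have ha : (i - 1) + 1 ≤ cntGe' B1 j (sortedBids B1 (i - 1)) :=
      rank_count_lt B1 j hi1 (by omega)
    have hty : sortedBids B1 (i - 1) ≤ B2 j := by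
      rw [hB2, Function.update_self]
      calc sortedBids B1 (i - 1) ≤ sortedBids B2 (i - 1) :=
            sortedBids_update_le B j hxy hi1
        _ ≤ sortedBids B2 (buyerRank B2 j) := sortedBids_anti B2 (by omega) hi1
        _ = y := by rw [sortedBids_rank B2 j, hB2, Function.update_self]
    have hb := cntGe'_succ_le B2 j hty
    have hc : i + 1 ≤ cntGe B2 (sortedBids B1 (i - 1)) := by
      have := he (sortedBids B1 (i - 1))
      omega
    exact (le_sortedBids_iff B2 hi).2 hc

end Cross

section Deals
variable {n : ℕ} (A B : Fin n → ℝ)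

lemma sortedAsks_mono {i k : ℕ} (hik : i ≤ k) (hk : k < n) :
    sortedAsks A i ≤ sortedAsks A k := by
  have hi : i < n := lt_of_le_of_lt hik hk
  simp only [sortedAsks, dif_pos hi, dif_pos hk]
  exact Tuple.monotone_sort A (show (⟨i, hi⟩ : Fin n) ≤ ⟨k, hk⟩ from hik)

lemma numDeals_le : numDeals A B ≤ n :=
  le_trans (Finset.card_filter_le _ _) (le_of_eq (Finset.card_range n))

lemma lt_numDeals_iff {i : ℕ} :
    i < numDeals A B ↔ i < n ∧ sortedAsks A i ≤ sortedBids B i := by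
  classical
  set S := (Finset.range n).filter fun i => sortedAsks A i ≤ sortedBids B i with hS
  have hclosed : ∀ {a b : ℕ}, a ≤ b → b ∈ S → a ∈ S := by
    intro a b hab hb
    rw [hS, Finset.mem_filter, Finset.mem_range] at *
    obtain ⟨hbn, hble⟩ := hb
    have han : a < n := lt_of_le_of_lt hab hbn
    refine ⟨han, ?_⟩
    calc sortedAsks A a ≤ sortedAsks A b := sortedAsks_mono A hab hbn
      _ ≤ sortedBids B b := hble
      _ ≤ sortedBids B a := sortedBids_anti B hab hbn
  constructor
  · intro h
    have hiS : i ∈ S := by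
      by_contra hni
      have hsub : S ⊆ Finset.range i := by
        intro m hm
        rw [Finset.mem_range]
        by_contra hmi
        exact hni (hclosed (le_of_not_gt hmi) hm)
      have := Finset.card_le_card hsub
      rw [Finset.card_range] at this
      unfold numDeals at h
      rw [← hS] at h
      omega
    rw [hS, Finset.mem_filter, Finset.mem_range] at hiS
    exact hiS
  · intro ⟨hin, hle⟩
    have hiS : i ∈ S := by rw [hS, Finset.mem_filter, Finset.mem_range]; exact ⟨hin, hle⟩
    have hsub : Finset.range (i + 1) ⊆ S := by
      intro m hm
      rw [Finset.mem_range] at hm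
      exact hclosed (by omega) hiS
    have := Finset.card_le_card hsub
    rw [Finset.card_range] at this
    unfold numDeals
    rw [← hS]
    omega

lemma deal_holds {i : ℕ} (h : i < numDeals A B) : sortedAsks A i ≤ sortedBids B i :=
  ((lt_numDeals_iff A B).1 h).2

lemma deal_fails {i : ℕ} (h : numDeals A B ≤ i) (hi : i < n) :
    sortedBids B i < sortedAsks A i := by
  by_contra hc
  push_neg at hc
  have := (lt_numDeals_iff A B).2 ⟨hi, hc⟩
  omega

lemma le_numDeals {m : ℕ} (hm : m ≤ n) (h : ∀ i < m, sortedAsks A i ≤ sortedBids B i) :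
    m ≤ numDeals A B := by
  by_contra hc
  push_neg at hc
  have h1 := h (numDeals A B) hc
  have := (lt_numDeals_iff A B).2 ⟨lt_of_lt_of_le hc hm, h1⟩
  omega

end Deals

section Mech
variable {n : ℕ} (A B : Fin n → ℝ) (j : Fin n) {x y : ℝ}

lemma bid_at_rank (x : ℝ) :
    sortedBids (Function.update B j x) (buyerRank (Function.update B j x) j) = x := by
  rw [sortedBids_rank, Function.update_self]

/-- If a buyer wins, the price is at most his bid. -/
lemma price_le_bid (hw : buyerWins A (Function.update B j x) j) :
    price A (Function.update B j x) ≤ x := by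
  set B1 := Function.update B j x with hB1
  set K := numDeals A B1 with hK
  set r := buyerRank B1 j with hr
  have hKn : K ≤ n := numDeals_le A B1
  unfold buyerWins at hw
  unfold price
  by_cases hc : caseOne A B1
  · rw [if_pos hc] at hw ⊢
    obtain ⟨hK1, hKlt, hle⟩ := hc
    have h1 : sortedBids B1 (K - 1) ≤ sortedBids B1 r :=
      sortedBids_anti B1 (by omega) (by omega)
    rw [hr, bid_at_rank B j x] at h1
    exact le_trans hle h1
  · rw [if_neg hc] at hw ⊢
    have h1 : sortedBids B1 (K - 1) ≤ sortedBids B1 r :=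
      sortedBids_anti B1 (by omega) (by omega)
    rw [hr, bid_at_rank B j x] at h1
    exact h1

/-- Raising a winning-range bid does not change the deal count. -/
lemma numDeals_eq_of_rank_lt (hxy : x ≤ y)
    (hr : buyerRank (Function.update B j x) j < numDeals A (Function.update B j x)) :
    numDeals A (Function.update B j y) = numDeals A (Function.update B j x) := by
  set B1 := Function.update B j x with hB1
  set B2 := Function.update B j y with hB2
  set K := numDeals A B1 with hK
  have hKn : K ≤ n := numDeals_le A B1
  have hge : K ≤ numDeals A B2 := by
    apply le_numDeals A B2 hKn
    intro i hi
    exact le_trans (deal_holds A B1 hi) (sortedBids_update_le B j hxy (by omega))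
  have hle : numDeals A B2 ≤ K := by
    by_contra hcon
    push_neg at hcon
    have hKlt : K < n := lt_of_lt_of_le hcon (numDeals_le A B2)
    have h1 : sortedAsks A K ≤ sortedBids B2 K := deal_holds A B2 hcon
    have h2 : sortedBids B2 K = sortedBids B1 K :=
      sortedBids_update_above B j hxy hKlt hr
    have h3 : sortedBids B1 K < sortedAsks A K := deal_fails A B1 le_rfl hKlt
    rw [h2] at h1
    exact absurd h1 (not_le.mpr h3)
  omega

lemma caseOne_mono (hxy : x ≤ y)
    (hKeq : numDeals A (Function.update B j y) = numDeals A (Function.update B j x))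
    (hc : caseOne A (Function.update B j x)) : caseOne A (Function.update B j y) := by
  obtain ⟨h1, h2, h3⟩ := hc
  refine ⟨by omega, by omega, ?_⟩
  rw [hKeq]
  exact le_trans h3 (sortedBids_update_le B j hxy (by omega))

/-- Winning is monotone in the bid. -/
lemma wins_mono (hxy : x ≤ y) (hw : buyerWins A (Function.update B j x) j) :
    buyerWins A (Function.update B j y) j := by
  set B1 := Function.update B j x with hB1
  set B2 := Function.update B j y with hB2
  set K := numDeals A B1 with hK
  set r1 := buyerRank B1 j with hr1
  set r2 := buyerRank B2 j with hr2
  have hr21 : r2 ≤ r1 := rank_update_le B j hxy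
  unfold buyerWins at hw
  have hrK : r1 < K := by
    by_cases hc : caseOne A B1
    · rw [if_pos hc] at hw; exact hw
    · rw [if_neg hc] at hw; omega
  have hKeq : numDeals A B2 = K := numDeals_eq_of_rank_lt A B j hxy hrK
  unfold buyerWins
  by_cases hc2 : caseOne A B2
  · rw [if_pos hc2, hKeq]; omega
  · rw [if_neg hc2, hKeq]
    have hc1 : ¬ caseOne A B1 := fun hc1 => hc2 (caseOne_mono A B j hxy hKeq hc1)
    rw [if_neg hc1] at hw
    omega

/-- The price does not depend on the winner's bid. -/
lemma price_eq_of_wins (hxy : x ≤ y) (hwx : buyerWins A (Function.update B j x) j)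
    (hwy : buyerWins A (Function.update B j y) j) :
    price A (Function.update B j x) = price A (Function.update B j y) := by
  set B1 := Function.update B j x with hB1
  set B2 := Function.update B j y with hB2
  set K := numDeals A B1 with hK
  set r1 := buyerRank B1 j with hr1
  have hKn : K ≤ n := numDeals_le A B1
  unfold buyerWins at hwx
  have hrK : r1 < K := by
    by_cases hc : caseOne A B1
    · rw [if_pos hc] at hwx; exact hwx
    · rw [if_neg hc] at hwx; omega
  have hKeq : numDeals A B2 = K := numDeals_eq_of_rank_lt A B j hxy hrK
  unfold price
  by_cases hc1 : caseOne A B1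
  · rw [if_pos hc1, if_pos (caseOne_mono A B j hxy hKeq hc1), hKeq]
  · rw [if_neg hc1] at hwx ⊢
    have hr1K : r1 + 1 < K := hwx
    have hsh : sortedBids B2 (K - 1) = sortedBids B1 (K - 1) :=
      sortedBids_update_above B j hxy (show K - 1 < n by omega)
        (show buyerRank B1 j < K - 1 by omega)
    by_cases hc2 : caseOne A B2
    · exfalso
      obtain ⟨hA1, hA2, hA3⟩ := hc2
      rw [hKeq] at hA1 hA2 hA3
      rw [hsh] at hA3
      exact hc1 ⟨hA1, hA2, hA3⟩
    · rw [if_neg hc2, hKeq, hsh]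

end Mech

section Mech2
variable {n : ℕ} (A B : Fin n → ℝ) (j : Fin n) {x y : ℝ}

lemma deal_low_of_lt_rank (hxy : x ≤ y) {i : ℕ}
    (hir : i < buyerRank (Function.update B j x) j)
    (hrK : buyerRank (Function.update B j x) j < numDeals A (Function.update B j y)) :
    sortedAsks A i ≤ sortedBids (Function.update B j x) i := by
  set B1 := Function.update B j x with hB1
  set B2 := Function.update B j y with hB2
  set K := numDeals A B2 with hK
  set r1 := buyerRank B1 j with hr1
  set r2 := buyerRank B2 j with hr2
  have hKn : K ≤ n := numDeals_le A B2
  have hin : i < n := by omega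
  by_cases h : i < r2
  · rw [← sortedBids_update_below B j hxy h]
    exact deal_holds A B2 (by omega)
  · push_neg at h
    have hsh0 := sortedBids_update_shift B j hxy
      (show r2 < i + 1 by omega) (show i + 1 ≤ r1 by omega)
    have hsh : sortedBids B2 (i + 1) = sortedBids B1 i := by simpa using hsh0
    calc sortedAsks A i ≤ sortedAsks A (i + 1) := sortedAsks_mono A (by omega) (by omega)
      _ ≤ sortedBids B2 (i + 1) := deal_holds A B2 (by omega)
      _ = sortedBids B1 i := hsh

lemma deal_at_rank (hxy : x ≤ y)
    (hr : buyerRank (Function.update B j x) j + 1 < numDeals A (Function.update B j y)) :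
    sortedAsks A (buyerRank (Function.update B j x) j) ≤ x := by
  set B1 := Function.update B j x with hB1
  set B2 := Function.update B j y with hB2
  set K := numDeals A B2 with hK
  set r1 := buyerRank B1 j with hr1
  have hKn : K ≤ n := numDeals_le A B2
  have hab : sortedBids B2 (r1 + 1) = sortedBids B1 (r1 + 1) :=
    sortedBids_update_above B j hxy (show r1 + 1 < n by omega)
      (show buyerRank B1 j < r1 + 1 by omega)
  have h1 : sortedBids B1 (r1 + 1) ≤ sortedBids B1 r1 :=
    sortedBids_anti B1 (by omega) (by omega)
  rw [hr1, bid_at_rank B j x] at h1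
  calc sortedAsks A r1 ≤ sortedAsks A (r1 + 1) := sortedAsks_mono A (by omega) (by omega)
    _ ≤ sortedBids B2 (r1 + 1) := deal_holds A B2 (by omega)
    _ = sortedBids B1 (r1 + 1) := hab
    _ ≤ x := h1

lemma numDeals_update_le_of_rank_lt (hxy : x ≤ y)
    (hr : buyerRank (Function.update B j x) j < numDeals A (Function.update B j y)) :
    numDeals A (Function.update B j x) ≤ numDeals A (Function.update B j y) := by
  set B1 := Function.update B j x with hB1
  set B2 := Function.update B j y with hB2
  by_contra hcon
  push_neg at hcon
  have h2n : numDeals A B2 < n := lt_of_lt_of_le hcon (numDeals_le A B1)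
  have h1 : sortedAsks A (numDeals A B2) ≤ sortedBids B1 (numDeals A B2) :=
    deal_holds A B1 hcon
  have h2 : sortedBids B2 (numDeals A B2) = sortedBids B1 (numDeals A B2) :=
    sortedBids_update_above B j hxy h2n hr
  have h3 : sortedBids B2 (numDeals A B2) < sortedAsks A (numDeals A B2) :=
    deal_fails A B2 le_rfl h2n
  rw [h2] at h3
  exact absurd h1 (not_le.mpr h3)

lemma numDeals_eq_low (hxy : x ≤ y)
    (hr : buyerRank (Function.update B j x) j + 1 < numDeals A (Function.update B j y)) :
    numDeals A (Function.update B j x) = numDeals A (Function.update B j y) := by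
  set B1 := Function.update B j x with hB1
  set B2 := Function.update B j y with hB2
  set K := numDeals A B2 with hK
  set r1 := buyerRank B1 j with hr1
  have hKn : K ≤ n := numDeals_le A B2
  have hge : K ≤ numDeals A B1 := by
    apply le_numDeals A B1 hKn
    intro i hi
    rcases lt_trichotomy i r1 with h | h | h
    · exact deal_low_of_lt_rank A B j hxy h (show buyerRank B1 j < numDeals A B2 by omega)
    · rw [h]
      have := deal_at_rank A B j hxy hr
      calc sortedAsks A r1 ≤ x := this
        _ = sortedBids B1 r1 := (bid_at_rank B j x).symm
    · rw [← sortedBids_update_above B j hxy (by omega) h]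
      exact deal_holds A B2 hi
  have hle : numDeals A B1 ≤ K :=
    numDeals_update_le_of_rank_lt A B j hxy (show r1 < K by omega)
  omega

/-- If `y` wins but `x` loses, then the price under `y` is at least `x`. -/
lemma bid_le_price_of_lose (hxy : x ≤ y)
    (hwy : buyerWins A (Function.update B j y) j)
    (hwx : ¬ buyerWins A (Function.update B j x) j) :
    x ≤ price A (Function.update B j y) := by
  set B1 := Function.update B j x with hB1
  set B2 := Function.update B j y with hB2
  set K := numDeals A B2 with hK
  set r1 := buyerRank B1 j with hr1
  set r2 := buyerRank B2 j with hr2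
  have hKn : K ≤ n := numDeals_le A B2
  have hr21 : r2 ≤ r1 := rank_update_le B j hxy
  have hr1n : r1 < n := buyerRank_lt B1 j
  unfold buyerWins at hwy hwx
  unfold price
  by_cases hc2 : caseOne A B2
  · rw [if_pos hc2] at hwy ⊢
    obtain ⟨hK1, hKlt, hle⟩ := hc2
    by_cases h1 : K ≤ r1
    · have hx : sortedBids B1 r1 ≤ sortedBids B1 (K - 1) :=
        sortedBids_anti B1 (by omega) hr1n
      rw [hr1, bid_at_rank B j x] at hx
      have hsh0 := sortedBids_update_shift B j hxy
        (show r2 < K by omega) (show K ≤ r1 from h1)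
      have hfail : sortedBids B2 K < sortedAsks A K := deal_fails A B2 le_rfl hKlt
      rw [hsh0] at hfail
      linarith
    · push_neg at h1
      by_cases h2 : r1 + 1 < K
      · exfalso
        apply hwx
        have hKeq : numDeals A B1 = K := numDeals_eq_low A B j hxy h2
        by_cases hc1 : caseOne A B1
        · rw [if_pos hc1, hKeq]; omega
        · rw [if_neg hc1, hKeq]; omega
      · have hr1e : r1 = K - 1 := by omega
        by_cases h3 : sortedAsks A r1 ≤ x
        · have hall : ∀ i < K, sortedAsks A i ≤ sortedBids B1 i := by
            intro i hi
            rcases lt_trichotomy i r1 with h | h | h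
            · exact deal_low_of_lt_rank A B j hxy h
                (show buyerRank B1 j < numDeals A B2 by omega)
            · rw [h]
              calc sortedAsks A r1 ≤ x := h3
                _ = sortedBids B1 r1 := (bid_at_rank B j x).symm
            · omega
          have hge : K ≤ numDeals A B1 := le_numDeals A B1 hKn hall
          have hle2 : numDeals A B1 ≤ K :=
            numDeals_update_le_of_rank_lt A B j hxy (show r1 < K by omega)
          have hKeq : numDeals A B1 = K := by omega
          have hc1 : ¬ caseOne A B1 := by
            intro hc1
            apply hwx
            rw [if_pos hc1, hKeq]
            omega
          unfold caseOne at hc1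
          push_neg at hc1
          have hfin := hc1 (by omega) (by omega)
          rw [hKeq] at hfin
          have hxb : sortedBids B1 (K - 1) = x := by
            rw [← hr1e, hr1, bid_at_rank B j x]
          rw [hxb] at hfin
          linarith
        · push_neg at h3
          have hmono : sortedAsks A r1 ≤ sortedAsks A K := sortedAsks_mono A (by omega) hKlt
          linarith
  · rw [if_neg hc2] at hwy ⊢
    by_cases h1 : K - 1 ≤ r1
    · have hx : sortedBids B1 r1 ≤ sortedBids B1 (K - 2) :=
        sortedBids_anti B1 (by omega) hr1n
      rw [hr1, bid_at_rank B j x] at hx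
      have hsh0 := sortedBids_update_shift B j hxy
        (show r2 < K - 1 by omega) (show K - 1 ≤ r1 from h1)
      have he : K - 1 - 1 = K - 2 := by omega
      rw [he] at hsh0
      rw [hsh0]
      exact hx
    · push_neg at h1
      exfalso
      apply hwx
      have hKeq : numDeals A B1 = K :=
        numDeals_eq_low A B j hxy (show buyerRank B1 j + 1 < numDeals A B2 by omega)
      by_cases hc1 : caseOne A B1
      · rw [if_pos hc1, hKeq]; omega
      · rw [if_neg hc1, hKeq]; omega

end Mech2
end SBBA


/-- SBBA is dominant-strategy truthful for buyers: for every buyer `j` with true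
valuation `v`, every profile of the other agents' reports, and every realization of
the randomness (buyers' outcomes are deterministic), bidding the true value `v`
yields at least the utility of any other bid `β`, where the utility is `v - p` if
the buyer trades at price `p` and `0` otherwise. -/
theorem sbba_buyer_truthful {n : ℕ} (A B : Fin n → ℝ) (j : Fin n) (v β : ℝ) :
    (if buyerWins A (Function.update B j β) j
      then v - price A (Function.update B j β) else 0) ≤
    (if buyerWins A (Function.update B j v) j
      then v - price A (Function.update B j v) else 0) := by
  by_cases hwb : buyerWins A (Function.update B j β) j
  · by_cases hwv : buyerWins A (Function.update B j v) j
    · rw [if_pos hwb, if_pos hwv]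
      rcases le_total β v with h | h
      · rw [SBBA.price_eq_of_wins A B j h hwb hwv]
      · rw [SBBA.price_eq_of_wins A B j h hwv hwb]
    · rw [if_pos hwb, if_neg hwv]
      have hvβ : v ≤ β := by
        by_contra h
        push_neg at h
        exact hwv (SBBA.wins_mono A B j h.le hwb)
      have := SBBA.bid_le_price_of_lose A B j hvβ hwb hwv
      linarith
  · rw [if_neg hwb]
    by_cases hwv : buyerWins A (Function.update B j v) j
    · rw [if_pos hwv]
      have := SBBA.price_le_bid A B j hwv
      linarith
    · rw [if_neg hwv]
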